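/- Let X be a pointed metric space and F a Banach space. Define the Lipschitz Hilbert norm of a base-point-preserving Lipschitz map T : X → F as H(T) = inf ‖B‖·Lip(A), the infimum over all factorizations T = B ∘ A where H is a Hilbert space, A : X → H is base-point-preserving Lipschitz, and B : H → F is bounded linear. If T₁, T₂ : X → F both admit such Hilbert-space factorizations, then so does T₁ + T₂, and H(T₁ + T₂) ≤ H(T₁) + H(T₂). (The factorization of T₁+T₂ goes through the Hilbert space ℓ²-direct sum H₁ ⊕ H₂.) -/

import Mathlib

open scoped NNReal

set_option maxHeartbeats 4000000

/-- A factorization `T = B ∘ A` through a (real) Hilbert space, with `A` base-point-preserving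
Lipschitz and `B` bounded linear. -/
structure HilbertFactorization {X F : Type*} [MetricSpace X] [Zero X]
    [NormedAddCommGroup F] [NormedSpace ℝ F] (T : X → F) where
  H : Type
  [nacg : NormedAddCommGroup H]
  [ips : InnerProductSpace ℝ H]
  [cs : CompleteSpace H]
  A : X → H
  B : H →L[ℝ] F
  lipA : ℝ≥0
  hA : LipschitzWith lipA A
  hA0 : A 0 = 0
  fact : ∀ x, T x = B (A x)

attribute [instance] HilbertFactorization.nacg HilbertFactorization.ips HilbertFactorization.cs

/-- The Lipschitz Hilbert norm `H(T) = inf ‖B‖ · Lip(A)` over all Hilbert space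
factorizations. -/
noncomputable def hilbNorm {X F : Type*} [MetricSpace X] [Zero X]
    [NormedAddCommGroup F] [NormedSpace ℝ F] (T : X → F) : ℝ :=
  sInf {c | ∃ f : HilbertFactorization T, c = ‖f.B‖ * (f.lipA : ℝ)}

noncomputable def combineFact {X F : Type*} [MetricSpace X] [Zero X]
    [NormedAddCommGroup F] [NormedSpace ℝ F] {T₁ T₂ : X → F}
    (f₁ : HilbertFactorization T₁) (f₂ : HilbertFactorization T₂)
    (t₁ t₂ : ℝ≥0) (ht₁ : t₁ ≠ 0) (ht₂ : t₂ ≠ 0) :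
    HilbertFactorization (fun x => T₁ x + T₂ x) where
  H := WithLp 2 (f₁.H × f₂.H)
  A x := (WithLp.equiv 2 _).symm ((t₁ : ℝ) • f₁.A x, (t₂ : ℝ) • f₂.A x)
  B := (((t₁ : ℝ)⁻¹ • f₁.B).comp (ContinuousLinearMap.fst ℝ f₁.H f₂.H)
        + ((t₂ : ℝ)⁻¹ • f₂.B).comp (ContinuousLinearMap.snd ℝ f₁.H f₂.H)).comp
      (WithLp.prodContinuousLinearEquiv 2 ℝ f₁.H f₂.H).toContinuousLinearMap
  lipA := NNReal.sqrt (t₁ ^ 2 * f₁.lipA ^ 2 + t₂ ^ 2 * f₂.lipA ^ 2)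
  hA := by
    apply LipschitzWith.of_dist_le_mul
    intro x y
    rw [WithLp.prod_dist_eq_of_L2]
    simp only [WithLp.equiv_symm_apply, WithLp.toLp_fst, WithLp.toLp_snd]
    rw [dist_smul₀, dist_smul₀, Real.norm_of_nonneg t₁.coe_nonneg,
      Real.norm_of_nonneg t₂.coe_nonneg]
    have h1 := f₁.hA.dist_le_mul x y
    have h2 := f₂.hA.dist_le_mul x y
    have hL : ((NNReal.sqrt (t₁ ^ 2 * f₁.lipA ^ 2 + t₂ ^ 2 * f₂.lipA ^ 2)) : ℝ) ^ 2
        = (t₁:ℝ)^2*(f₁.lipA:ℝ)^2 + (t₂:ℝ)^2*(f₂.lipA:ℝ)^2 := by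
      push_cast
      rw [Real.sq_sqrt (by positivity)]
    set L : ℝ := ((NNReal.sqrt (t₁ ^ 2 * f₁.lipA ^ 2 + t₂ ^ 2 * f₂.lipA ^ 2)) : ℝ)
    have hL0 : 0 ≤ L := NNReal.coe_nonneg _
    rw [show L * dist x y = √((L * dist x y)^2) from
      (Real.sqrt_sq (by positivity)).symm]
    apply Real.sqrt_le_sqrt
    have key : (L * dist x y) ^ 2
        = ((t₁:ℝ)^2*(f₁.lipA:ℝ)^2 + (t₂:ℝ)^2*(f₂.lipA:ℝ)^2) * dist x y ^ 2 := by
      rw [mul_pow L, hL]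
    rw [key]
    nlinarith [dist_nonneg (x := f₁.A x) (y := f₁.A y), dist_nonneg (x := f₂.A x) (y := f₂.A y),
      t₁.coe_nonneg, t₂.coe_nonneg, sq_nonneg ((t₁:ℝ)), sq_nonneg ((t₂:ℝ)),
      mul_le_mul h1 h1 dist_nonneg (by positivity : (0:ℝ) ≤ (f₁.lipA:ℝ) * dist x y),
      mul_le_mul h2 h2 dist_nonneg (by positivity : (0:ℝ) ≤ (f₂.lipA:ℝ) * dist x y)]
  hA0 := by
    simp [f₁.hA0, f₂.hA0]
  fact := by
    intro x
    have ht₁' : (t₁ : ℝ) ≠ 0 := by exact_mod_cast ht₁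
    have ht₂' : (t₂ : ℝ) ≠ 0 := by exact_mod_cast ht₂
    simp [f₁.fact x, f₂.fact x, WithLp.prodContinuousLinearEquiv_apply, smul_smul,
      inv_mul_cancel₀ ht₁', inv_mul_cancel₀ ht₂', WithLp.linearEquiv_apply, WithLp.equiv_symm_apply, WithLp.toLp_fst, WithLp.toLp_snd]

lemma cauchy2 {a b c d : ℝ} (ha : 0 ≤ a) (hb : 0 ≤ b) (hc : 0 ≤ c) (hd : 0 ≤ d) :
    a * c + b * d ≤ √(a ^ 2 + b ^ 2) * √(c ^ 2 + d ^ 2) := by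
  rw [← Real.sqrt_mul (by positivity)]
  rw [show a * c + b * d = √((a * c + b * d) ^ 2) from (Real.sqrt_sq (by positivity)).symm]
  apply Real.sqrt_le_sqrt
  nlinarith [sq_nonneg (a * d - b * c)]

lemma combineFact_B_norm_le {X F : Type*} [MetricSpace X] [Zero X]
    [NormedAddCommGroup F] [NormedSpace ℝ F] {T₁ T₂ : X → F}
    (f₁ : HilbertFactorization T₁) (f₂ : HilbertFactorization T₂)
    (t₁ t₂ : ℝ≥0) (ht₁ : t₁ ≠ 0) (ht₂ : t₂ ≠ 0) :
    ‖(combineFact f₁ f₂ t₁ t₂ ht₁ ht₂).B‖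
      ≤ √((‖f₁.B‖ / t₁) ^ 2 + (‖f₂.B‖ / t₂) ^ 2) := by
  apply ContinuousLinearMap.opNorm_le_bound _ (by positivity)
  intro v
  have hv : (combineFact f₁ f₂ t₁ t₂ ht₁ ht₂).B v
      = (t₁ : ℝ)⁻¹ • f₁.B v.fst + (t₂ : ℝ)⁻¹ • f₂.B v.snd := rfl
  rw [hv, show ‖v‖ = √(‖v.fst‖ ^ 2 + ‖v.snd‖ ^ 2) from
    WithLp.prod_norm_eq_of_L2 (α := f₁.H) (β := f₂.H) v]
  calc ‖(t₁ : ℝ)⁻¹ • f₁.B v.fst + (t₂ : ℝ)⁻¹ • f₂.B v.snd‖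
      ≤ ‖(t₁ : ℝ)⁻¹ • f₁.B v.fst‖ + ‖(t₂ : ℝ)⁻¹ • f₂.B v.snd‖ := norm_add_le _ _
    _ ≤ (‖f₁.B‖ / t₁) * ‖v.fst‖ + (‖f₂.B‖ / t₂) * ‖v.snd‖ := by
        rw [norm_smul, norm_smul, Real.norm_of_nonneg (by positivity),
          Real.norm_of_nonneg (by positivity)]
        have b1 := f₁.B.le_opNorm v.fst
        have b2 := f₂.B.le_opNorm v.snd
        have hp1 : (0:ℝ) < (t₁:ℝ) := by positivity
        have hp2 : (0:ℝ) < (t₂:ℝ) := by positivity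
        rw [div_eq_inv_mul, div_eq_inv_mul, mul_assoc, mul_assoc]
        gcongr
    _ ≤ √((‖f₁.B‖ / t₁) ^ 2 + (‖f₂.B‖ / t₂) ^ 2) * √(‖v.fst‖ ^ 2 + ‖v.snd‖ ^ 2) :=
        cauchy2 (by positivity) (by positivity) (norm_nonneg _) (norm_nonneg _)

lemma factSet_bddBelow {X F : Type*} [MetricSpace X] [Zero X]
    [NormedAddCommGroup F] [NormedSpace ℝ F] (T : X → F) :
    BddBelow {c | ∃ f : HilbertFactorization T, c = ‖f.B‖ * (f.lipA : ℝ)} := by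
  refine ⟨0, fun c hc => ?_⟩
  obtain ⟨g, rfl⟩ := hc
  positivity

lemma hilbNorm_le_fact {X F : Type*} [MetricSpace X] [Zero X]
    [NormedAddCommGroup F] [NormedSpace ℝ F] {T : X → F} (f : HilbertFactorization T) :
    hilbNorm T ≤ ‖f.B‖ * (f.lipA : ℝ) :=
  csInf_le (factSet_bddBelow T) ⟨f, rfl⟩

lemma hilbNorm_nonneg {X F : Type*} [MetricSpace X] [Zero X]
    [NormedAddCommGroup F] [NormedSpace ℝ F] (T : X → F) : 0 ≤ hilbNorm T := by
  apply Real.sInf_nonneg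
  rintro c ⟨g, rfl⟩
  positivity

lemma exists_fact_lt {X F : Type*} [MetricSpace X] [Zero X]
    [NormedAddCommGroup F] [NormedSpace ℝ F] {T : X → F}
    (h : Nonempty (HilbertFactorization T)) {δ : ℝ} (hδ : 0 < δ) :
    ∃ f : HilbertFactorization T, ‖f.B‖ * (f.lipA : ℝ) < hilbNorm T + δ := by
  obtain ⟨f₀⟩ := h
  have hne : {c | ∃ f : HilbertFactorization T, c = ‖f.B‖ * (f.lipA : ℝ)}.Nonempty :=
    ⟨_, f₀, rfl⟩
  have := (csInf_lt_iff (factSet_bddBelow T) hne).mp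
    (show sInf _ < hilbNorm T + δ by rw [hilbNorm] at *; linarith)
  obtain ⟨c, ⟨f, rfl⟩, hc⟩ := this
  exact ⟨f, hc⟩

theorem stmt14 {X F : Type*} [MetricSpace X] [Zero X]
    [NormedAddCommGroup F] [NormedSpace ℝ F] [CompleteSpace F]
    (T₁ T₂ : X → F) (hT₁0 : T₁ 0 = 0) (hT₂0 : T₂ 0 = 0)
    (h₁ : Nonempty (HilbertFactorization T₁)) (h₂ : Nonempty (HilbertFactorization T₂)) :
    Nonempty (HilbertFactorization fun x => T₁ x + T₂ x) ∧
      hilbNorm (fun x => T₁ x + T₂ x) ≤ hilbNorm T₁ + hilbNorm T₂ := by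
  obtain ⟨f₁⟩ := h₁
  obtain ⟨f₂⟩ := h₂
  refine ⟨⟨combineFact f₁ f₂ 1 1 one_ne_zero one_ne_zero⟩, ?_⟩
  apply le_of_forall_pos_le_add
  intro δ hδ
  obtain ⟨g₁, hg₁⟩ := exists_fact_lt ⟨f₁⟩ (show (0:ℝ) < δ/4 by linarith)
  obtain ⟨g₂, hg₂⟩ := exists_fact_lt ⟨f₂⟩ (show (0:ℝ) < δ/4 by linarith)
  set a₁ : ℝ := (g₁.lipA : ℝ) with ha₁
  set b₁ : ℝ := ‖g₁.B‖ with hb₁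
  set a₂ : ℝ := (g₂.lipA : ℝ) with ha₂
  set b₂ : ℝ := ‖g₂.B‖ with hb₂
  have ha₁0 : 0 ≤ a₁ := NNReal.coe_nonneg _
  have ha₂0 : 0 ≤ a₂ := NNReal.coe_nonneg _
  have hb₁0 : 0 ≤ b₁ := norm_nonneg _
  have hb₂0 : 0 ≤ b₂ := norm_nonneg _
  set S : ℝ := a₁ + b₁ + a₂ + b₂ with hS
  have hS0 : 0 ≤ S := by positivity
  set ε : ℝ := min 1 (δ / (2 * (S + 2))) with hεdef
  have hε : 0 < ε := lt_min one_pos (by positivity)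
  have hε1 : ε ≤ 1 := min_le_left _ _
  have hε2 : ε ≤ δ / (2 * (S + 2)) := min_le_right _ _
  set t₁ : ℝ≥0 := (√((b₁ + ε) / (a₁ + ε))).toNNReal with ht₁def
  set t₂ : ℝ≥0 := (√((b₂ + ε) / (a₂ + ε))).toNNReal with ht₂def
  have ct₁ : (t₁ : ℝ) = √((b₁ + ε) / (a₁ + ε)) := Real.coe_toNNReal _ (Real.sqrt_nonneg _)
  have ct₂ : (t₂ : ℝ) = √((b₂ + ε) / (a₂ + ε)) := Real.coe_toNNReal _ (Real.sqrt_nonneg _)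
  have ht₁pos : (0:ℝ) < (t₁ : ℝ) := by rw [ct₁]; positivity
  have ht₂pos : (0:ℝ) < (t₂ : ℝ) := by rw [ct₂]; positivity
  have ht₁ : t₁ ≠ 0 := by intro h; rw [h] at ht₁pos; simp at ht₁pos
  have ht₂ : t₂ ≠ 0 := by intro h; rw [h] at ht₂pos; simp at ht₂pos
  have ht₁sq : (t₁ : ℝ) ^ 2 = (b₁ + ε) / (a₁ + ε) := by
    rw [ct₁, Real.sq_sqrt (by positivity)]
  have ht₂sq : (t₂ : ℝ) ^ 2 = (b₂ + ε) / (a₂ + ε) := by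
    rw [ct₂, Real.sq_sqrt (by positivity)]
  -- bounds on the four quantities
  have u₁ : (b₁ / (t₁ : ℝ)) ^ 2 ≤ (a₁ + ε) * (b₁ + ε) := by
    rw [div_pow, ht₁sq, div_div_eq_mul_div, div_le_iff₀ (by positivity)]
    nlinarith [mul_nonneg (show (0:ℝ) ≤ a₁ + ε by linarith)
      (show (0:ℝ) ≤ ε * (2 * b₁ + ε) by positivity)]
  have u₂ : (b₂ / (t₂ : ℝ)) ^ 2 ≤ (a₂ + ε) * (b₂ + ε) := by
    rw [div_pow, ht₂sq, div_div_eq_mul_div, div_le_iff₀ (by positivity)]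
    nlinarith [mul_nonneg (show (0:ℝ) ≤ a₂ + ε by linarith)
      (show (0:ℝ) ≤ ε * (2 * b₂ + ε) by positivity)]
  have v₁ : (t₁ : ℝ) ^ 2 * a₁ ^ 2 ≤ (a₁ + ε) * (b₁ + ε) := by
    rw [ht₁sq, div_mul_eq_mul_div, div_le_iff₀ (by positivity)]
    nlinarith [mul_nonneg (show (0:ℝ) ≤ b₁ + ε by linarith)
      (show (0:ℝ) ≤ ε * (2 * a₁ + ε) by positivity)]
  have v₂ : (t₂ : ℝ) ^ 2 * a₂ ^ 2 ≤ (a₂ + ε) * (b₂ + ε) := by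
    rw [ht₂sq, div_mul_eq_mul_div, div_le_iff₀ (by positivity)]
    nlinarith [mul_nonneg (show (0:ℝ) ≤ b₂ + ε by linarith)
      (show (0:ℝ) ≤ ε * (2 * a₂ + ε) by positivity)]
  set s : ℝ := (a₁ + ε) * (b₁ + ε) + (a₂ + ε) * (b₂ + ε) with hsdef
  -- the combined factorization
  have key := hilbNorm_le_fact (combineFact g₁ g₂ t₁ t₂ ht₁ ht₂)
  have hB := combineFact_B_norm_le g₁ g₂ t₁ t₂ ht₁ ht₂
  have hLip : (((combineFact g₁ g₂ t₁ t₂ ht₁ ht₂).lipA : ℝ))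
      = √((t₁:ℝ)^2 * a₁^2 + (t₂:ℝ)^2 * a₂^2) := by
    have : (combineFact g₁ g₂ t₁ t₂ ht₁ ht₂).lipA
        = NNReal.sqrt (t₁ ^ 2 * g₁.lipA ^ 2 + t₂ ^ 2 * g₂.lipA ^ 2) := rfl
    rw [this]
    push_cast
    ring_nf
    rfl
  have step : hilbNorm (fun x => T₁ x + T₂ x) ≤ s := by
    refine key.trans ?_
    have h1 : ‖(combineFact g₁ g₂ t₁ t₂ ht₁ ht₂).B‖ * ((combineFact g₁ g₂ t₁ t₂ ht₁ ht₂).lipA : ℝ)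
        ≤ √((b₁ / t₁) ^ 2 + (b₂ / t₂) ^ 2) * √((t₁:ℝ)^2 * a₁^2 + (t₂:ℝ)^2 * a₂^2) := by
      rw [hLip]
      exact mul_le_mul_of_nonneg_right hB (Real.sqrt_nonneg _)
    refine h1.trans ?_
    calc √((b₁ / t₁) ^ 2 + (b₂ / t₂) ^ 2) * √((t₁:ℝ)^2 * a₁^2 + (t₂:ℝ)^2 * a₂^2)
        ≤ √s * √s := by
          apply mul_le_mul (Real.sqrt_le_sqrt (by rw [hsdef]; linarith))
            (Real.sqrt_le_sqrt (by rw [hsdef]; linarith)) (Real.sqrt_nonneg _)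
            (Real.sqrt_nonneg _)
      _ = s := Real.mul_self_sqrt (by positivity)
  have hs_le : s ≤ a₁ * b₁ + a₂ * b₂ + δ / 2 := by
    have hεS : ε * (S + 2) ≤ δ / 2 := by
      calc ε * (S + 2) ≤ (δ / (2 * (S + 2))) * (S + 2) :=
            mul_le_mul_of_nonneg_right hε2 (by linarith)
        _ = δ / 2 := by field_simp
    have hee : ε * ε ≤ ε := by nlinarith
    rw [hS] at hεS
    rw [hsdef]
    nlinarith [hεS, hee]
  have hH₁ := hilbNorm_nonneg T₁
  have hH₂ := hilbNorm_nonneg T₂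
  calc hilbNorm (fun x => T₁ x + T₂ x) ≤ s := step
    _ ≤ a₁ * b₁ + a₂ * b₂ + δ / 2 := hs_le
    _ ≤ hilbNorm T₁ + hilbNorm T₂ + δ := by nlinarith [hg₁, hg₂]
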